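/- For all n ≥ 1 and 2 ≤ k ≤ n-1, the signless Bessel numbers of the first kind satisfy a(n,k-1) · a(n,k+1) ≤ a(n,k)², i.e., the sequence {a(n,k)}_{1≤k≤n} is log-concave. -/
import Mathlib


/-- The signless Bessel number of the first kind
`a(n,k) = (2n-k-1)! / (2^(n-k) (n-k)! (k-1)!)`. -/
def aQ (n k : ℕ) : ℚ :=
  (Nat.factorial (2 * n - k - 1) : ℚ) /
    (2 ^ (n - k) * Nat.factorial (n - k) * Nat.factorial (k - 1))

/-- The signless Bessel numbers of the first kind form a log-concave sequence in `k`. -/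
theorem stmt_11 (n k : ℕ) (hn : 1 ≤ n) (hk2 : 2 ≤ k) (hkn : k ≤ n - 1) :
    aQ n (k - 1) * aQ n (k + 1) ≤ aQ n k ^ 2 := by
  obtain ⟨j, rfl⟩ : ∃ j, k = j + 2 := ⟨k - 2, by omega⟩
  obtain ⟨m, rfl⟩ : ∃ m, n = j + m + 3 := ⟨n - j - 3, by omega⟩
  simp only [aQ]
  have e1 : 2 * (j + m + 3) - (j + 2 - 1) - 1 = j + 2*m + 4 := by omega
  have e2 : j + m + 3 - (j + 2 - 1) = m + 2 := by omega
  have e3 : j + 2 - 1 - 1 = j := by omega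
  have e4 : 2 * (j + m + 3) - (j + 2 + 1) - 1 = j + 2*m + 2 := by omega
  have e5 : j + m + 3 - (j + 2 + 1) = m := by omega
  have e6 : j + 2 + 1 - 1 = j + 2 := by omega
  have e7 : 2 * (j + m + 3) - (j + 2) - 1 = j + 2*m + 3 := by omega
  have e8 : j + m + 3 - (j + 2) = m + 1 := by omega
  have e9 : j + 2 - 1 = j + 1 := by omega
  rw [e1, e2, e3, e4, e5, e6, e7, e8, e9]
  have f1 : Nat.factorial (j + 2*m + 4) = (j + 2*m + 4) * ((j + 2*m + 3) * Nat.factorial (j + 2*m + 2)) := by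
    rw [show j + 2*m + 4 = (j + 2*m + 3) + 1 from rfl, Nat.factorial_succ,
      show j + 2*m + 3 = (j + 2*m + 2) + 1 from rfl, Nat.factorial_succ]
  have f2 : Nat.factorial (j + 2*m + 3) = (j + 2*m + 3) * Nat.factorial (j + 2*m + 2) := by
    rw [show j + 2*m + 3 = (j + 2*m + 2) + 1 from rfl, Nat.factorial_succ]
  have f3 : Nat.factorial (m + 2) = (m + 2) * ((m + 1) * Nat.factorial m) := by
    rw [Nat.factorial_succ, Nat.factorial_succ]
  have f4 : Nat.factorial (m + 1) = (m + 1) * Nat.factorial m := Nat.factorial_succ m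
  have f5 : Nat.factorial (j + 2) = (j + 2) * ((j + 1) * Nat.factorial j) := by
    rw [show j + 2 = (j+1)+1 from rfl, Nat.factorial_succ, Nat.factorial_succ]
  have f6 : Nat.factorial (j + 1) = (j + 1) * Nat.factorial j := Nat.factorial_succ j
  rw [f1, f2, f3, f4, f5, f6]
  push_cast
  set F : ℚ := (Nat.factorial (j + 2*m + 2) : ℚ) with hF
  set M : ℚ := (Nat.factorial m : ℚ)
  set J : ℚ := (Nat.factorial j : ℚ)
  have hFpos : 0 < F := by positivity
  have hMpos : 0 < M := by positivity
  have hJpos : 0 < J := by positivity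
  rw [div_mul_div_comm, div_pow, div_le_div_iff₀ (by positivity) (by positivity)]
  have key : ((m:ℚ) + 1) * (j + 2*m + 4) * (j + 1) ≤ (m + 2) * (j + 2*m + 3) * (j + 2) := by
    nlinarith [sq_nonneg (m:ℚ), sq_nonneg (j:ℚ)]
  have hC : (0:ℚ) ≤ ((j:ℚ) + 2*m + 3) * F^2 * 2^(2*m+2) * M^2 * J^2 := by positivity
  calc ((j:ℚ) + 2*m + 4) * (((j:ℚ) + 2*m + 3) * F) * F *
        (2 ^ (m + 1) * ((m + 1) * M) * ((j + 1) * J)) ^ 2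
      = (((m:ℚ) + 1) * (j + 2*m + 4) * (j + 1)) * ((m+1) * (j+1) *
        (((j:ℚ) + 2*m + 3) * F^2 * 2^(2*m+2) * M^2 * J^2)) := by ring
    _ ≤ (((m:ℚ) + 2) * (j + 2*m + 3) * (j + 2)) * ((m+1) * (j+1) *
        (((j:ℚ) + 2*m + 3) * F^2 * 2^(2*m+2) * M^2 * J^2)) := by
        apply mul_le_mul_of_nonneg_right key
        positivity
    _ = (((j:ℚ) + 2*m + 3) * F) ^ 2 *
        (2 ^ (m + 2) * ((m + 2) * ((m + 1) * M)) * J *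
          (2 ^ m * M * ((j + 2) * ((j + 1) * J)))) := by ring
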